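/- Let X be a Banach space with a Schauder basis (eₙ) that is tight with constants. Then (eₙ) is continuously tight; that is, there exists a continuous map f : bb(eₙ) → [ℕ] assigning to each normalized block sequence ȳ a sequence of successive intervals Iⱼ = [f(ȳ)₂ⱼ, f(ȳ)₂ⱼ₊₁] such that for every infinite A ⊆ ℕ, the closed span of ȳ does not embed into the closed span of {eₙ : n ∉ ∪_{j∈A} Iⱼ}. -/

import Mathlib

def IsBasicSeq {E : Type*} [NormedAddCommGroup E] [NormedSpace ℝ E] (e : ℕ → E) : Prop :=
  (∀ n, e n ≠ 0) ∧ ∃ C : ℝ, 0 < C ∧ ∀ (a : ℕ → ℝ) (n m : ℕ), n ≤ m →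
    ‖∑ i ∈ Finset.range n, a i • e i‖ ≤ C * ‖∑ i ∈ Finset.range m, a i • e i‖

/-- A normalized block sequence of the basis `e`. -/
def IsBlockSeq {X : Type*} [NormedAddCommGroup X] [NormedSpace ℝ X] (e y : ℕ → X) : Prop :=
  ∃ p : ℕ → ℕ, StrictMono p ∧ ∀ n, ‖y n‖ = 1 ∧
    y n ∈ Submodule.span ℝ (e '' Set.Ico (p n) (p (n + 1)))

/-- `Z` `K`-embeds into `W` : there is an embedding `T` with `‖z‖ ≤ ‖Tz‖ ≤ K ‖z‖`. -/
def Embeds (K : ℝ) (Z W : Type*) [NormedAddCommGroup Z] [NormedSpace ℝ Z]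
    [NormedAddCommGroup W] [NormedSpace ℝ W] : Prop :=
  ∃ T : Z →L[ℝ] W, ∀ z : Z, ‖z‖ ≤ ‖T z‖ ∧ ‖T z‖ ≤ K * ‖z‖

open Set Submodule Finset
set_option maxHeartbeats 1000000


section S1
variable {X : Type*} [NormedAddCommGroup X] [NormedSpace ℝ X] {e : ℕ → X}

noncomputable def bC (he : IsBasicSeq e) : ℝ := he.2.choose

lemma bC_pos (he : IsBasicSeq e) : 0 < bC he := he.2.choose_spec.1

lemma bC_spec (he : IsBasicSeq e) : ∀ (a : ℕ → ℝ) (n m : ℕ), n ≤ m →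
    ‖∑ i ∈ Finset.range n, a i • e i‖ ≤ bC he * ‖∑ i ∈ Finset.range m, a i • e i‖ :=
  he.2.choose_spec.2

lemma basic_li (he : IsBasicSeq e) : LinearIndependent ℝ e := by
  rw [linearIndependent_iff']
  intro s g hg i hi
  classical
  set a : ℕ → ℝ := fun j => if j ∈ s then g j else 0 with ha
  set m : ℕ := s.sup id + 1 with hm
  have hsub : s ⊆ Finset.range m := by
    intro j hj
    simp only [Finset.mem_range, hm]
    exact Nat.lt_succ_of_le (Finset.le_sup (f := id) hj)
  have hsum : ∑ j ∈ Finset.range m, a j • e j = 0 := by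
    have h1 : ∑ j ∈ Finset.range m, a j • e j = ∑ j ∈ s, a j • e j :=
      (Finset.sum_subset hsub (fun j _ hj => by simp [ha, hj])).symm
    have h2 : ∑ j ∈ s, a j • e j = ∑ j ∈ s, g j • e j :=
      Finset.sum_congr rfl (fun j hj => by simp [ha, hj])
    rw [h1, h2, hg]
  have hzero : ∀ n ≤ m, ∑ j ∈ Finset.range n, a j • e j = 0 := by
    intro n hn
    have := bC_spec he a n m hn
    rw [hsum, norm_zero, mul_zero] at this
    exact norm_eq_zero.1 (le_antisymm this (norm_nonneg _))
  have hterm : a i • e i = 0 := by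
    have h1 := hzero (i + 1) (Nat.succ_le_of_lt (hsub hi |> Finset.mem_range.1))
    have h2 := hzero i (le_of_lt (hsub hi |> Finset.mem_range.1))
    have := Finset.sum_range_succ (fun j => a j • e j) i
    rw [h1, h2] at this
    simpa using this.symm
  have : a i = 0 := by
    rcases smul_eq_zero.1 hterm with h | h
    · exact h
    · exact absurd h (he.1 i)
  simpa [ha, hi] using this

noncomputable def Pspan (he : IsBasicSeq e) (n : ℕ) :
    ↥(span ℝ (Set.range e)) →ₗ[ℝ] X where
  toFun x := Finsupp.linearCombination ℝ e (((basic_li he).repr x).filter (· < n))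
  map_add' x y := by rw [map_add, Finsupp.filter_add, map_add]
  map_smul' c x := by rw [map_smul, Finsupp.filter_smul, map_smul]; rfl

lemma repr_supp_sub (he : IsBasicSeq e) {S : Set ℕ} (x : ↥(span ℝ (Set.range e)))
    (hx : (x : X) ∈ span ℝ (e '' S)) : ↑((basic_li he).repr x).support ⊆ S := by
  obtain ⟨l, hl, hlx⟩ := (Finsupp.mem_span_image_iff_linearCombination ℝ).1 hx
  have heq : (basic_li he).repr x = l := by
    apply basic_li he
    rw [(basic_li he).linearCombination_repr x, hlx]
  rw [heq]
  exact Finsupp.mem_supported ℝ l |>.1 hl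

lemma Pspan_eq_sum (he : IsBasicSeq e) (n : ℕ) (x : ↥(span ℝ (Set.range e))) :
    Pspan he n x = ∑ i ∈ Finset.range n, ((basic_li he).repr x) i • e i := by
  classical
  show Finsupp.linearCombination ℝ e (((basic_li he).repr x).filter (· < n)) = _
  rw [Finsupp.linearCombination_apply, Finsupp.sum]
  have h1 : ∑ i ∈ (((basic_li he).repr x).filter (· < n)).support,
      (((basic_li he).repr x).filter (· < n)) i • e i
      = ∑ i ∈ Finset.range n, (((basic_li he).repr x).filter (· < n)) i • e i :=
    Finset.sum_subset (fun i hi => by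
        rw [Finsupp.support_filter, Finset.mem_filter] at hi
        exact Finset.mem_range.2 hi.2)
      (fun i _ hi => by rw [Finsupp.notMem_support_iff.1 hi, zero_smul])
  rw [h1]
  exact Finset.sum_congr rfl (fun i hi => by
    rw [Finsupp.filter_apply, if_pos (Finset.mem_range.1 hi)])

lemma coe_eq_sum (he : IsBasicSeq e) (x : ↥(span ℝ (Set.range e))) {m : ℕ}
    (hm : ∀ i ∈ ((basic_li he).repr x).support, i < m) :
    (x : X) = ∑ i ∈ Finset.range m, ((basic_li he).repr x) i • e i := by
  classical
  conv_lhs => rw [← (basic_li he).linearCombination_repr x]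
  rw [Finsupp.linearCombination_apply, Finsupp.sum]
  exact Finset.sum_subset (fun i hi => Finset.mem_range.2 (hm i hi))
    (fun i _ hi => by rw [Finsupp.notMem_support_iff.1 hi, zero_smul])

lemma Pspan_norm_le (he : IsBasicSeq e) (n : ℕ) (x : ↥(span ℝ (Set.range e))) :
    ‖Pspan he n x‖ ≤ bC he * ‖(x : X)‖ := by
  classical
  set d := (basic_li he).repr x with hd
  set m : ℕ := max n (d.support.sup id + 1) with hm
  have hx : (x : X) = ∑ i ∈ Finset.range m, d i • e i :=
    coe_eq_sum he x (fun i hi => lt_of_lt_of_le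
      (Nat.lt_succ_of_le (Finset.le_sup (f := id) hi)) (le_max_right _ _))
  have hp : Pspan he n x = ∑ i ∈ Finset.range n, d i • e i := Pspan_eq_sum he n x
  rw [hp, hx]
  exact bC_spec he d n m (le_max_left _ _)

lemma Pspan_mem_head (he : IsBasicSeq e) (n : ℕ) (x : ↥(span ℝ (Set.range e))) :
    Pspan he n x ∈ span ℝ (e '' {i | i < n}) := by
  rw [Pspan_eq_sum]
  exact Submodule.sum_mem _ (fun i hi => Submodule.smul_mem _ _
    (Submodule.subset_span ⟨i, Finset.mem_range.1 hi, rfl⟩))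

lemma Pspan_eq_self (he : IsBasicSeq e) {S : Set ℕ} {n : ℕ} (x : ↥(span ℝ (Set.range e)))
    (hx : (x : X) ∈ span ℝ (e '' S)) (hS : ∀ i ∈ S, i < n) : Pspan he n x = x := by
  classical
  have hsupp := repr_supp_sub he x hx
  have : ((basic_li he).repr x).filter (· < n) = (basic_li he).repr x := by
    ext i
    rw [Finsupp.filter_apply]
    by_cases hi : i < n
    · rw [if_pos hi]
    · rw [if_neg hi]
      by_contra h
      exact hi (hS i (hsupp (Finsupp.mem_support_iff.2 (fun h' => h (h'.symm))))) 
  show Finsupp.linearCombination ℝ e _ = _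
  rw [this, (basic_li he).linearCombination_repr x]

lemma Pspan_eq_zero (he : IsBasicSeq e) {S : Set ℕ} {n : ℕ} (x : ↥(span ℝ (Set.range e)))
    (hx : (x : X) ∈ span ℝ (e '' S)) (hS : ∀ i ∈ S, n ≤ i) : Pspan he n x = 0 := by
  classical
  have hsupp := repr_supp_sub he x hx
  have : ((basic_li he).repr x).filter (· < n) = 0 := by
    ext i
    rw [Finsupp.filter_apply]
    by_cases hi : i < n
    · rw [if_pos hi]
      by_contra h
      exact absurd (hS i (hsupp (Finsupp.mem_support_iff.2 h))) (Nat.not_le.2 hi)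
    · rw [if_neg hi]; rfl
  show Finsupp.linearCombination ℝ e _ = _
  rw [this, map_zero]

lemma Pspan_sub_mem (he : IsBasicSeq e) {S : Set ℕ} (n : ℕ) (x : ↥(span ℝ (Set.range e)))
    (hx : (x : X) ∈ span ℝ (e '' S)) :
    (x : X) - Pspan he n x ∈ span ℝ (e '' (S ∩ {i | n ≤ i})) := by
  classical
  set d := (basic_li he).repr x with hd
  have hsupp := repr_supp_sub he x hx
  have hxl : (x : X) - Pspan he n x
      = Finsupp.linearCombination ℝ e (d - d.filter (· < n)) := by
    rw [map_sub]
    congr 1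
    exact ((basic_li he).linearCombination_repr x).symm
  rw [hxl]
  apply (Finsupp.mem_span_image_iff_linearCombination ℝ).2
  refine ⟨d - d.filter (· < n), ?_, rfl⟩
  rw [Finsupp.mem_supported]
  intro i hi
  have hi' : d i - (d.filter (· < n)) i ≠ 0 := by
    simpa using Finsupp.mem_support_iff.1 hi
  rw [Finsupp.filter_apply] at hi'
  by_cases h : i < n
  · rw [if_pos h] at hi'; simp at hi'
  · rw [if_neg h] at hi'
    refine ⟨hsupp (Finsupp.mem_support_iff.2 (by simpa using hi')), Nat.not_lt.1 h⟩


end S1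


section S3
variable {X : Type*} [NormedAddCommGroup X] [NormedSpace ℝ X] [CompleteSpace X] {e : ℕ → X}

lemma dense_span (hdense : DenseRange fun a : ℕ →₀ ℝ => ∑ n ∈ a.support, a n • e n) :
    Dense ((span ℝ (Set.range e) : Submodule ℝ X) : Set X) := by
  have hrange : Set.range (fun a : ℕ →₀ ℝ => ∑ n ∈ a.support, a n • e n)
      = ((span ℝ (Set.range e) : Submodule ℝ X) : Set X) := by
    ext x
    constructor
    · rintro ⟨c, rfl⟩
      exact Submodule.sum_mem _ (fun i _ => Submodule.smul_mem _ _
        (Submodule.subset_span (Set.mem_range_self i)))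
    · intro hx
      obtain ⟨c, hc⟩ := (Finsupp.mem_span_range_iff_exists_finsupp).1 hx
      exact ⟨c, hc⟩
  rw [DenseRange, hrange] at hdense
  exact hdense

noncomputable def PXc (he : IsBasicSeq e) (n : ℕ) : ↥(span ℝ (Set.range e)) →L[ℝ] X :=
  LinearMap.mkContinuous (Pspan he n) (bC he) (fun x => Pspan_norm_le he n x)

lemma denseRange_subtypeL (hdense : DenseRange fun a : ℕ →₀ ℝ => ∑ n ∈ a.support, a n • e n) :
    DenseRange ((span ℝ (Set.range e) : Submodule ℝ X).subtypeL) := by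
  have := dense_span hdense
  rw [DenseRange]
  convert this using 1
  exact Subtype.range_coe

noncomputable def PX (he : IsBasicSeq e)
    (hdense : DenseRange fun a : ℕ →₀ ℝ => ∑ n ∈ a.support, a n • e n) (n : ℕ) : X →L[ℝ] X :=
  (PXc he n).extend (span ℝ (Set.range e)).subtypeL

lemma PX_coe (he : IsBasicSeq e) (hdense : DenseRange fun a : ℕ →₀ ℝ => ∑ n ∈ a.support, a n • e n)
    (n : ℕ) (x : ↥(span ℝ (Set.range e))) : PX he hdense n (x : X) = Pspan he n x :=
  ContinuousLinearMap.extend_eq _ (denseRange_subtypeL hdense)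
    (isometry_subtype_coe.isUniformInducing) x

lemma PX_norm_le (he : IsBasicSeq e)
    (hdense : DenseRange fun a : ℕ →₀ ℝ => ∑ n ∈ a.support, a n • e n) (n : ℕ) (x : X) :
    ‖PX he hdense n x‖ ≤ bC he * ‖x‖ := by
  have hcl : IsClosed {x : X | ‖PX he hdense n x‖ ≤ bC he * ‖x‖} :=
    isClosed_le ((PX he hdense n).continuous.norm) (continuous_const.mul continuous_norm)
  have hsub : ((span ℝ (Set.range e) : Submodule ℝ X) : Set X)
      ⊆ {x : X | ‖PX he hdense n x‖ ≤ bC he * ‖x‖} := by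
    rintro x hx
    have := Pspan_norm_le he n ⟨x, hx⟩
    simpa [PX_coe he hdense n ⟨x, hx⟩] using this
  have := (dense_span hdense).closure_eq
  have h2 : closure ((span ℝ (Set.range e) : Submodule ℝ X) : Set X)
      ⊆ {x : X | ‖PX he hdense n x‖ ≤ bC he * ‖x‖} := hcl.closure_subset_iff.2 hsub
  rw [this] at h2
  exact h2 (Set.mem_univ x)

lemma PX_mem_head (he : IsBasicSeq e)
    (hdense : DenseRange fun a : ℕ →₀ ℝ => ∑ n ∈ a.support, a n • e n) (n : ℕ) (x : X) :
    PX he hdense n x ∈ span ℝ (e '' {i | i < n}) := by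
  haveI : FiniteDimensional ℝ ↥(span ℝ (e '' {i | i < n})) :=
    FiniteDimensional.span_of_finite ℝ ((Set.finite_Iio n).image e)
  have hcl : IsClosed {x : X | PX he hdense n x ∈ span ℝ (e '' {i | i < n})} :=
    IsClosed.preimage (PX he hdense n).continuous
      (Submodule.closed_of_finiteDimensional _)
  have hsub : ((span ℝ (Set.range e) : Submodule ℝ X) : Set X)
      ⊆ {x : X | PX he hdense n x ∈ span ℝ (e '' {i | i < n})} := by
    rintro x hx
    have := Pspan_mem_head he n ⟨x, hx⟩
    simpa [PX_coe he hdense n ⟨x, hx⟩] using this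
  have h2 := hcl.closure_subset_iff.2 hsub
  rw [(dense_span hdense).closure_eq] at h2
  exact h2 (Set.mem_univ x)

lemma PX_eq_self (he : IsBasicSeq e)
    (hdense : DenseRange fun a : ℕ →₀ ℝ => ∑ n ∈ a.support, a n • e n) {S : Set ℕ} {n : ℕ}
    {x : X} (hx : x ∈ span ℝ (e '' S)) (hS : ∀ i ∈ S, i < n) : PX he hdense n x = x := by
  have hxM : x ∈ span ℝ (Set.range e) :=
    span_mono (Set.image_subset_range e S) hx
  have := Pspan_eq_self he (⟨x, hxM⟩ : ↥(span ℝ (Set.range e))) hx hS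
  rw [PX_coe he hdense n ⟨x, hxM⟩]
  exact this

lemma PX_eq_zero (he : IsBasicSeq e)
    (hdense : DenseRange fun a : ℕ →₀ ℝ => ∑ n ∈ a.support, a n • e n) {S : Set ℕ} {n : ℕ}
    {x : X} (hx : x ∈ span ℝ (e '' S)) (hS : ∀ i ∈ S, n ≤ i) : PX he hdense n x = 0 := by
  have hxM : x ∈ span ℝ (Set.range e) :=
    span_mono (Set.image_subset_range e S) hx
  have := Pspan_eq_zero he (⟨x, hxM⟩ : ↥(span ℝ (Set.range e))) hx hS
  rw [PX_coe he hdense n ⟨x, hxM⟩]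
  exact this

lemma PX_sub_mem (he : IsBasicSeq e)
    (hdense : DenseRange fun a : ℕ →₀ ℝ => ∑ n ∈ a.support, a n • e n) {S : Set ℕ} (n : ℕ)
    {x : X} (hx : x ∈ (span ℝ (e '' S)).topologicalClosure) :
    x - PX he hdense n x ∈ (span ℝ (e '' (S ∩ {i | n ≤ i}))).topologicalClosure := by
  have hcl : IsClosed {x : X |
      x - PX he hdense n x ∈ closure ((span ℝ (e '' (S ∩ {i | n ≤ i})) : Submodule ℝ X) : Set X)} :=
    IsClosed.preimage (continuous_id.sub (PX he hdense n).continuous) isClosed_closure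
  have hsub : ((span ℝ (e '' S) : Submodule ℝ X) : Set X) ⊆ {x : X |
      x - PX he hdense n x ∈ closure ((span ℝ (e '' (S ∩ {i | n ≤ i})) : Submodule ℝ X) : Set X)} := by
    intro x hxS
    have hxM : x ∈ span ℝ (Set.range e) := span_mono (Set.image_subset_range e S) hxS
    have := Pspan_sub_mem he n (⟨x, hxM⟩ : ↥(span ℝ (Set.range e))) hxS
    rw [← PX_coe he hdense n ⟨x, hxM⟩] at this
    exact subset_closure this
  have h3 : x ∈ closure ((span ℝ (e '' S) : Submodule ℝ X) : Set X) := by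
    rw [← Submodule.topologicalClosure_coe]
    exact hx
  have := hcl.closure_subset_iff.2 hsub h3
  rw [← SetLike.mem_coe, Submodule.topologicalClosure_coe]
  exact this

end S3

section S4
variable {X : Type*} [NormedAddCommGroup X] [NormedSpace ℝ X] [CompleteSpace X] {e : ℕ → X}
variable (he : IsBasicSeq e)
variable (hdense : DenseRange fun a : ℕ →₀ ℝ => ∑ n ∈ a.support, a n • e n)
include he hdense

lemma block_delta {q : ℕ → ℕ} (hq : Monotone q) {z : ℕ → X}
    (hz : ∀ j, z j ∈ span ℝ (e '' Set.Ico (q j) (q (j + 1)))) (i j : ℕ) :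
    PX he hdense (q (i + 1)) (z j) - PX he hdense (q i) (z j)
      = if i = j then z j else 0 := by
  rcases lt_trichotomy j i with h | h | h
  · rw [if_neg (by omega)]
    rw [PX_eq_self he hdense (hz j) (fun s hs => lt_of_lt_of_le hs.2 (hq h)),
      PX_eq_self he hdense (hz j) (fun s hs => lt_of_lt_of_le hs.2 (hq (by omega))), sub_self]
  · subst h
    rw [if_pos rfl]
    rw [PX_eq_self he hdense (hz j) (fun s hs => hs.2),
      PX_eq_zero he hdense (hz j) (fun s hs => hs.1), sub_zero]
  · rw [if_neg (by omega)]
    rw [PX_eq_zero he hdense (hz j) (fun s hs => le_trans (hq (by omega)) hs.1),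
      PX_eq_zero he hdense (hz j) (fun s hs => le_trans (hq (le_of_lt h)) hs.1), sub_self]

lemma block_sum_delta {q : ℕ → ℕ} (hq : Monotone q) {z : ℕ → X}
    (hz : ∀ j, z j ∈ span ℝ (e '' Set.Ico (q j) (q (j + 1))))
    (s : Finset ℕ) (g : ℕ → ℝ) (i : ℕ) (hi : i ∈ s) :
    PX he hdense (q (i + 1)) (∑ j ∈ s, g j • z j)
      - PX he hdense (q i) (∑ j ∈ s, g j • z j) = g i • z i := by
  have h1 : ∀ n : ℕ, PX he hdense n (∑ j ∈ s, g j • z j)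
      = ∑ j ∈ s, g j • PX he hdense n (z j) := by
    intro n
    rw [map_sum]
    exact Finset.sum_congr rfl (fun j _ => by rw [map_smul])
  rw [h1, h1, ← Finset.sum_sub_distrib]
  have h2 : ∀ j ∈ s, g j • PX he hdense (q (i+1)) (z j) - g j • PX he hdense (q i) (z j)
      = if i = j then g j • z j else 0 := by
    intro j _
    rw [← smul_sub, block_delta he hdense hq hz i j]
    by_cases h : i = j
    · rw [if_pos h, if_pos h]
    · rw [if_neg h, if_neg h, smul_zero]
  rw [Finset.sum_congr rfl h2, Finset.sum_ite_eq s i (fun j => g j • z j), if_pos hi]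

lemma block_indep {q : ℕ → ℕ} (hq : Monotone q) {z : ℕ → X}
    (hz : ∀ j, z j ∈ span ℝ (e '' Set.Ico (q j) (q (j + 1))))
    (hnz : ∀ j, z j ≠ 0) : LinearIndependent ℝ z := by
  rw [linearIndependent_iff']
  intro s g hsum i hi
  have := block_sum_delta he hdense hq hz s g i hi
  rw [hsum, map_zero, map_zero, sub_zero] at this
  rcases smul_eq_zero.1 this.symm with h | h
  · exact h
  · exact absurd h (hnz i)

lemma block_coeff {q : ℕ → ℕ} (hq : Monotone q) {z : ℕ → X}
    (hz : ∀ j, z j ∈ span ℝ (e '' Set.Ico (q j) (q (j + 1))))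
    (hnorm : ∀ j, ‖z j‖ = 1) (L : ℕ) (c : Fin (L + 1) → ℝ) (i : Fin (L + 1)) :
    |c i| ≤ 2 * bC he * ‖∑ k : Fin (L + 1), c k • z (k : ℕ)‖ := by
  classical
  set w := ∑ k : Fin (L + 1), c k • z (k : ℕ) with hw
  have hw2 : w = ∑ j ∈ Finset.range (L + 1), (fun j => if h : j < L + 1 then c ⟨j, h⟩ else 0) j • z j := by
    rw [hw, Finset.sum_range]
    exact Finset.sum_congr rfl (fun k _ => by simp; intro h; have := k.2; omega)
  have hkey : PX he hdense (q ((i : ℕ) + 1)) w - PX he hdense (q (i : ℕ)) w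
      = c i • z (i : ℕ) := by
    rw [hw2, block_sum_delta he hdense hq hz _ _ (i : ℕ) (Finset.mem_range.2 i.2)]
    simp [i.2]
  have hnormeq : |c i| = ‖c i • z (i : ℕ)‖ := by
    rw [norm_smul, hnorm, mul_one, Real.norm_eq_abs]
  rw [hnormeq, ← hkey]
  calc ‖PX he hdense (q ((i : ℕ) + 1)) w - PX he hdense (q (i : ℕ)) w‖
      ≤ ‖PX he hdense (q ((i : ℕ) + 1)) w‖ + ‖PX he hdense (q (i : ℕ)) w‖ := norm_sub_le _ _
    _ ≤ bC he * ‖w‖ + bC he * ‖w‖ := add_le_add (PX_norm_le he hdense _ w) (PX_norm_le he hdense _ w)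
    _ = 2 * bC he * ‖w‖ := by ring

end S4

section S5
variable {X : Type*} [NormedAddCommGroup X] [NormedSpace ℝ X] [CompleteSpace X] {e : ℕ → X}


def inclCLM {p q : Submodule ℝ X} (h : p ≤ q) : ↥p →L[ℝ] ↥q :=
  ⟨Submodule.inclusion h, Continuous.subtype_mk continuous_subtype_val _⟩

lemma inclCLM_norm {p q : Submodule ℝ X} (h : p ≤ q) (x : ↥p) : ‖inclCLM h x‖ = ‖x‖ := rfl

lemma subnorm {p : Submodule ℝ X} (x : ↥p) : ‖x‖ = ‖(x : X)‖ := rfl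

lemma embeds_mono_target {K : ℝ} {V W W' : Submodule ℝ X} (h : W ≤ W')
    (hemb : Embeds K ↥V ↥W) : Embeds K ↥V ↥W' := by
  obtain ⟨T, hT⟩ := hemb
  exact ⟨(inclCLM h).comp T, fun v => by
    exact hT v⟩

lemma embeds_mono_const {K K' : ℝ} (h : K ≤ K') {Z W : Type*} [NormedAddCommGroup Z]
    [NormedSpace ℝ Z] [NormedAddCommGroup W] [NormedSpace ℝ W]
    (hemb : Embeds K Z W) : Embeds K' Z W := by
  obtain ⟨T, hT⟩ := hemb
  exact ⟨T, fun v => ⟨(hT v).1, le_trans (hT v).2 (by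
    have := norm_nonneg v; nlinarith)⟩⟩

lemma pert (he : IsBasicSeq e)
    (hdense : DenseRange fun a : ℕ →₀ ℝ => ∑ n ∈ a.support, a n • e n)
    {q : ℕ → ℕ} (hq : Monotone q) {z : ℕ → X}
    (hz : ∀ j, z j ∈ span ℝ (e '' Set.Ico (q j) (q (j + 1)))) (hnorm : ∀ j, ‖z j‖ = 1)
    {K : ℝ} (hK : 0 < K) (L : ℕ) {ε : ℝ}
    (hεs : (L + 1 : ℝ) * (2 * bC he) * ε ≤ 1 / 3)
    {z' : ℕ → X} (hclose : ∀ i ≤ L, ‖z i - z' i‖ ≤ ε)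
    {V W : Submodule ℝ X} (hz' : ∀ i ≤ L, z' i ∈ V)
    (hemb : Embeds K ↥V ↥W) :
    Embeds (2 * K) ↥(span ℝ (z '' Set.Icc 0 L)) ↥W := by
  classical
  set fam : Fin (L + 1) → X := fun k => z (k : ℕ) with hfam
  have hfam_li : LinearIndependent ℝ fam :=
    (block_indep he hdense hq hz (fun j => by
      intro h0; have := hnorm j; rw [h0, norm_zero] at this; norm_num at this)).comp
      (Fin.val) Fin.val_injective
  have hset : z '' Set.Icc 0 L = Set.range fam := by
    ext x
    constructor
    · rintro ⟨i, ⟨_, hiL⟩, rfl⟩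
      exact ⟨⟨i, Nat.lt_succ_of_le hiL⟩, rfl⟩
    · rintro ⟨k, rfl⟩
      exact ⟨(k : ℕ), ⟨Nat.zero_le _, Nat.lt_succ_iff.1 k.2⟩, rfl⟩
  rw [show span ℝ (z '' Set.Icc 0 L) = span ℝ (Set.range fam) from by rw [hset]]
  haveI : FiniteDimensional ℝ ↥(span ℝ (Set.range fam)) :=
    FiniteDimensional.span_of_finite ℝ (Set.finite_range fam)
  set B := Module.Basis.span hfam_li with hB
  obtain ⟨T, hT⟩ := hemb
  set vW : Fin (L + 1) → ↥W := fun i => T ⟨z' (i : ℕ), hz' (i : ℕ) (Nat.lt_succ_iff.1 i.2)⟩ with hvW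
  set φ : ↥(span ℝ (Set.range fam)) →ₗ[ℝ] ↥W := B.constr ℝ vW with hφ
  have key : ∀ w : ↥(span ℝ (Set.range fam)),
      ‖w‖ ≤ (3 / 2 : ℝ) * ‖φ w‖ ∧ (3 / 2 : ℝ) * ‖φ w‖ ≤ 2 * K * ‖w‖ := by
    intro w
    set c : Fin (L + 1) → ℝ := fun i => B.repr w i with hc
    have hweq : (w : X) = ∑ i : Fin (L + 1), c i • z (i : ℕ) := by
      conv_lhs => rw [← B.sum_repr w]
      push_cast
      exact Finset.sum_congr rfl (fun i _ => by rw [Module.Basis.span_apply])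
    set v : ↥V := ∑ i : Fin (L + 1), c i • (⟨z' (i : ℕ), hz' (i : ℕ) (Nat.lt_succ_iff.1 i.2)⟩ : ↥V)
      with hv
    have hveq : (v : X) = ∑ i : Fin (L + 1), c i • z' (i : ℕ) := by
      rw [hv]; push_cast; rfl
    have hφw : φ w = T v := by
      rw [hφ, Module.Basis.constr_apply_fintype, hv, map_sum]
      exact Finset.sum_congr rfl (fun i _ => by rw [map_smul]; rfl)
    have hcoeff : ∀ i : Fin (L + 1), |c i| ≤ 2 * bC he * ‖(w : X)‖ := by
      intro i
      have h := block_coeff he hdense hq hz hnorm L c i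
      rw [← hweq] at h
      exact h
    have hdiff : ‖(v : X) - (w : X)‖ ≤ 1 / 3 * ‖(w : X)‖ := by
      have hsub : (v : X) - (w : X) = ∑ i : Fin (L + 1), c i • (z' (i : ℕ) - z (i : ℕ)) := by
        rw [hveq, hweq, ← Finset.sum_sub_distrib]
        exact Finset.sum_congr rfl (fun i _ => (smul_sub _ _ _).symm)
      rw [hsub]
      have h1 : ∀ i ∈ Finset.univ (α := Fin (L + 1)),
          ‖c i • (z' (i : ℕ) - z (i : ℕ))‖ ≤ (2 * bC he * ‖(w : X)‖) * ε := by
        intro i _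
        rw [norm_smul, Real.norm_eq_abs]
        have h2 : ‖z' (i : ℕ) - z (i : ℕ)‖ ≤ ε := by
          rw [norm_sub_rev]; exact hclose (i : ℕ) (Nat.lt_succ_iff.1 i.2)
        have h3 := hcoeff i
        have h4 : (0:ℝ) ≤ |c i| := abs_nonneg _
        have h5 : (0:ℝ) ≤ ‖z' (i : ℕ) - z (i : ℕ)‖ := norm_nonneg _
        nlinarith
      calc ‖∑ i : Fin (L + 1), c i • (z' (i : ℕ) - z (i : ℕ))‖
          ≤ ∑ i : Fin (L + 1), ‖c i • (z' (i : ℕ) - z (i : ℕ))‖ := norm_sum_le _ _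
        _ ≤ ∑ _i : Fin (L + 1), (2 * bC he * ‖(w : X)‖) * ε := Finset.sum_le_sum h1
        _ = (L + 1 : ℝ) * ((2 * bC he * ‖(w : X)‖) * ε) := by
            rw [Finset.sum_const, Finset.card_univ, Fintype.card_fin, nsmul_eq_mul]
            push_cast; ring
        _ = ((L + 1 : ℝ) * (2 * bC he) * ε) * ‖(w : X)‖ := by ring
        _ ≤ 1 / 3 * ‖(w : X)‖ := by
            have := norm_nonneg (w : X)
            have hbc := bC_pos he
            nlinarith
    have h1 : (2 / 3 : ℝ) * ‖(w : X)‖ ≤ ‖(v : X)‖ := by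
      obtain ⟨ha, hb⟩ := abs_le.1 (le_trans (abs_norm_sub_norm_le ((v : X)) ((w : X))) hdiff)
      nlinarith
    have h2 : ‖(v : X)‖ ≤ (4 / 3 : ℝ) * ‖(w : X)‖ := by
      obtain ⟨ha, hb⟩ := abs_le.1 (le_trans (abs_norm_sub_norm_le ((v : X)) ((w : X))) hdiff)
      nlinarith
    have hTv := hT v
    rw [hφw]
    simp only [subnorm] at hTv ⊢
    constructor
    · nlinarith [hTv.1, h1]
    · nlinarith [hTv.2, h2, hK]
  set ψ : ↥(span ℝ (Set.range fam)) →ₗ[ℝ] ↥W := (3 / 2 : ℝ) • φ with hψ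
  refine ⟨LinearMap.toContinuousLinearMap ψ, fun w => ?_⟩
  have hU : ‖LinearMap.toContinuousLinearMap ψ w‖ = (3 / 2 : ℝ) * ‖φ w‖ := by
    show ‖ψ w‖ = _
    rw [hψ, LinearMap.smul_apply, norm_smul, Real.norm_eq_abs]
    norm_num
  rw [hU]
  exact key w

end S5

section S6
variable {X : Type*} [NormedAddCommGroup X] [NormedSpace ℝ X] [CompleteSpace X] {e : ℕ → X}


noncomputable def TailS (e : ℕ → X) (l : ℕ) : Submodule ℝ X :=
  (span ℝ (e '' {n | l ≤ n})).topologicalClosure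

lemma icc_image_eq_range (y : ℕ → X) (l : ℕ) :
    y '' Set.Icc 0 l = Set.range (fun k : Fin (l + 1) => y (k : ℕ)) := by
  ext x
  constructor
  · rintro ⟨i, ⟨_, hiL⟩, rfl⟩
    exact ⟨⟨i, Nat.lt_succ_of_le hiL⟩, rfl⟩
  · rintro ⟨k, rfl⟩
    exact ⟨(k : ℕ), ⟨Nat.zero_le _, Nat.lt_succ_iff.1 k.2⟩, rfl⟩

lemma finrank_span_icc (he : IsBasicSeq e)
    (hdense : DenseRange fun a : ℕ →₀ ℝ => ∑ n ∈ a.support, a n • e n)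
    {y : ℕ → X} {p : ℕ → ℕ} (hp : StrictMono p)
    (hy : ∀ n, ‖y n‖ = 1 ∧ y n ∈ span ℝ (e '' Set.Ico (p n) (p (n + 1)))) (l : ℕ) :
    Module.finrank ℝ ↥(span ℝ (y '' Set.Icc 0 l)) = l + 1 := by
  have hli : LinearIndependent ℝ y :=
    block_indep he hdense hp.monotone (fun n => (hy n).2) (fun n => by
      intro h0; have := (hy n).1; rw [h0, norm_zero] at this; norm_num at this)
  rw [icc_image_eq_range y l]
  have hcomp : (fun k : Fin (l + 1) => y (k : ℕ)) = y ∘ (fun k : Fin (l + 1) => (k : ℕ)) := rfl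
  rw [hcomp, finrank_span_eq_card (hli.comp (fun k : Fin (l + 1) => (k : ℕ)) Fin.val_injective)]
  simp

lemma claim1 (he : IsBasicSeq e)
    (hdense : DenseRange fun a : ℕ →₀ ℝ => ∑ n ∈ a.support, a n • e n)
    (htight : ∀ y : ℕ → X, IsBlockSeq e y → ∀ K : ℝ, 0 < K → ∀ m : ℕ, ∃ l : ℕ, m < l ∧
      ¬ Embeds K ↥(Submodule.span ℝ (y '' Set.Icc m l))
          ↥((Submodule.span ℝ (e '' {n | l ≤ n})).topologicalClosure))
    {y : ℕ → X} {p : ℕ → ℕ} (hp : StrictMono p)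
    (hy : ∀ n, ‖y n‖ = 1 ∧ y n ∈ span ℝ (e '' Set.Ico (p n) (p (n + 1))))
    {K : ℝ} (hK : 0 < K) (a : ℕ) :
    ∃ l : ℕ, ∀ V : Submodule ℝ X, V ≤ span ℝ (y '' Set.Icc 0 l) →
      Module.finrank ℝ ↥(span ℝ (y '' Set.Icc 0 l)) ≤ Module.finrank ℝ ↥V + a →
      ¬ Embeds K ↥V ↥(TailS e l) := by
  classical
  by_contra hcon
  push_neg at hcon
  choose V hVle hVfr hVemb using hcon
  -- chunk spans
  set W : ℕ → Submodule ℝ X :=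
    fun i => span ℝ (Set.range (fun k : Fin (a + 1) => y (i * (a + 1) + (k : ℕ)))) with hW
  have hWfin : ∀ i, FiniteDimensional ℝ ↥(W i) :=
    fun i => FiniteDimensional.span_of_finite ℝ (Set.finite_range _)
  have hli : LinearIndependent ℝ y :=
    block_indep he hdense hp.monotone (fun n => (hy n).2) (fun n => by
      intro h0; have := (hy n).1; rw [h0, norm_zero] at this; norm_num at this)
  have hWrank : ∀ i, Module.finrank ℝ ↥(W i) = a + 1 := by
    intro i
    show Module.finrank ℝ
      ↥(span ℝ (Set.range (y ∘ fun k : Fin (a + 1) => i * (a + 1) + (k : ℕ)))) = a + 1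
    rw [finrank_span_eq_card (hli.comp (fun k : Fin (a + 1) => i * (a + 1) + (k : ℕ))
      (fun k k' h => Fin.val_injective (by
        have h' : i * (a + 1) + (k : ℕ) = i * (a + 1) + (k' : ℕ) := h
        omega)))]
    simp
  have hWle : ∀ i l, i * (a + 1) + a ≤ l → W i ≤ span ℝ (y '' Set.Icc 0 l) := by
    intro i l hil
    rw [hW, span_le]
    rintro _ ⟨k, rfl⟩
    exact subset_span ⟨i * (a + 1) + (k : ℕ), ⟨Nat.zero_le _, by have := k.2; omega⟩, rfl⟩
  -- find normalized vectors in V t ⊓ W i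
  have hex : ∀ t i, ∃ v : X, v ∈ W i ∧ ‖v‖ = 1 ∧ (i * (a + 1) + a ≤ t → v ∈ V t) := by
    intro t i
    by_cases hit : i * (a + 1) + a ≤ t
    · haveI hD : FiniteDimensional ℝ ↥(span ℝ (y '' Set.Icc 0 t)) :=
        FiniteDimensional.span_of_finite ℝ ((Set.finite_Icc 0 t).image y)
      haveI hVf : FiniteDimensional ℝ ↥(V t) := Submodule.finiteDimensional_of_le (hVle t)
      haveI := hWfin i
      have hsup : Module.finrank ℝ ↥(V t ⊔ W i) ≤ t + 1 := by
        rw [← finrank_span_icc he hdense hp hy t]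
        exact Submodule.finrank_mono (sup_le (hVle t) (hWle i t hit))
      have heq := Submodule.finrank_sup_add_finrank_inf_eq (V t) (W i)
      have hfr := hVfr t
      rw [finrank_span_icc he hdense hp hy t] at hfr
      have hWr := hWrank i
      have hinf : 0 < Module.finrank ℝ ↥(V t ⊓ W i) := by omega
      have hne : V t ⊓ W i ≠ ⊥ := by
        intro hbot
        rw [hbot, finrank_bot] at hinf
        exact Nat.lt_irrefl 0 hinf
      obtain ⟨v, hv, hvne⟩ := Submodule.exists_mem_ne_zero_of_ne_bot hne
      refine ⟨‖v‖⁻¹ • v, Submodule.smul_mem _ _ hv.2, ?_, fun _ => Submodule.smul_mem _ _ hv.1⟩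
      rw [norm_smul, norm_inv, norm_norm]
      exact inv_mul_cancel₀ (norm_ne_zero_iff.2 hvne)
    · refine ⟨y (i * (a + 1)), ?_, (hy _).1, fun h => absurd h hit⟩
      exact subset_span ⟨(0 : Fin (a + 1)), by simp⟩
  choose u hu1 hu2 hu3 using hex
  -- compactness
  set Sph : ℕ → Set X := fun i => Subtype.val '' (Metric.sphere (0 : ↥(W i)) 1) with hSph
  have hSphmem : ∀ i (v : X), v ∈ W i → ‖v‖ = 1 → v ∈ Sph i := by
    intro i v hv hn
    exact ⟨⟨v, hv⟩, by simpa [mem_sphere_iff_norm] using hn, rfl⟩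
  have hSphmem' : ∀ i (v : X), v ∈ Sph i → v ∈ W i ∧ ‖v‖ = 1 := by
    rintro i _ ⟨w, hw, rfl⟩
    exact ⟨w.2, by simpa [mem_sphere_iff_norm] using hw⟩
  have hSphc : ∀ i, IsCompact (Sph i) := by
    intro i
    haveI := hWfin i
    exact (isCompact_sphere (0 : ↥(W i)) 1).image continuous_subtype_val
  have hmem : ∀ t, (fun i => u t i) ∈ {x : ℕ → X | ∀ i, x i ∈ Sph i} :=
    fun t i => hSphmem i _ (hu1 t i) (hu2 t i)
  obtain ⟨z, hzmem, ψ, hψmono, hψtend⟩ :=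
    (isCompact_pi_infinite hSphc).tendsto_subseq hmem
  have hzW : ∀ i, z i ∈ W i := fun i => (hSphmem' i _ (hzmem i)).1
  have hznorm : ∀ i, ‖z i‖ = 1 := fun i => (hSphmem' i _ (hzmem i)).2
  -- z is a block sequence
  set q : ℕ → ℕ := fun i => p (i * (a + 1)) with hq
  have hqmono : StrictMono q := fun i j h => hp (by
    have : i * (a + 1) < j * (a + 1) := by
      apply Nat.mul_lt_mul_of_lt_of_le h (le_refl _)
      omega
    exact this)
  have hWblock : ∀ i, W i ≤ span ℝ (e '' Set.Ico (q i) (q (i + 1))) := by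
    intro i
    show span ℝ (Set.range fun k : Fin (a + 1) => y (i * (a + 1) + (k : ℕ))) ≤ _
    rw [span_le]
    rintro _ ⟨k, rfl⟩
    have hsub : Set.Ico (p (i * (a + 1) + (k : ℕ))) (p (i * (a + 1) + (k : ℕ) + 1))
        ⊆ Set.Ico (q i) (q (i + 1)) := by
      intro s hs
      refine ⟨le_trans (hp.monotone (Nat.le_add_right _ _)) hs.1,
        lt_of_lt_of_le hs.2 (hp.monotone ?_)⟩
      have hk2 := k.2
      have h2 : (i + 1) * (a + 1) = i * (a + 1) + (a + 1) := by ring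
      omega
    exact span_mono (Set.image_mono (f := e) hsub) (hy _).2
  have hzblock : ∀ i, z i ∈ span ℝ (e '' Set.Ico (q i) (q (i + 1))) :=
    fun i => hWblock i (hzW i)
  have hzbs : IsBlockSeq e z := ⟨q, hqmono, fun n => ⟨hznorm n, hzblock n⟩⟩
  -- apply tightness to z with constant 2K
  obtain ⟨l', hl'pos, hl'⟩ := htight z hzbs (2 * K) (by linarith) 0
  -- choose ε
  set A : ℝ := (l' + 1 : ℝ) * (2 * bC he) with hA
  have hApos : 0 < A := by
    have := bC_pos he
    rw [hA]; positivity
  set ε : ℝ := 1 / (3 * (A + 1)) with hε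
  have hεpos : 0 < ε := by rw [hε]; positivity
  have hεs : (l' + 1 : ℝ) * (2 * bC he) * ε ≤ 1 / 3 := by
    rw [← hA, hε, mul_one_div, div_le_div_iff₀ (by positivity) (by norm_num)]
    linarith
  -- pick t large
  have htd : ∀ i, Filter.Tendsto (fun t => u (ψ t) i) Filter.atTop (nhds (z i)) :=
    fun i => (tendsto_pi_nhds.1 hψtend) i
  have hNx : ∀ i, ∃ N, ∀ t ≥ N, dist (u (ψ t) i) (z i) < ε :=
    fun i => Metric.tendsto_atTop.1 (htd i) ε hεpos
  choose Nf hNf using hNx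
  set t : ℕ := max ((Finset.range (l' + 1)).sup Nf) (l' * (a + 1) + a + l') with ht
  have hψt : l' * (a + 1) + a ≤ ψ t ∧ l' ≤ ψ t := by
    have h1 : t ≤ ψ t := hψmono.le_apply
    have h2 : l' * (a + 1) + a + l' ≤ t := le_max_right _ _
    exact ⟨by omega, by omega⟩
  have hclose : ∀ i ≤ l', ‖z i - u (ψ t) i‖ ≤ ε := by
    intro i hi
    have hNi : Nf i ≤ t :=
      le_trans (Finset.le_sup (Finset.mem_range.2 (Nat.lt_succ_of_le hi))) (le_max_left _ _)
    have := hNf i t hNi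
    rw [dist_eq_norm] at this
    rw [norm_sub_rev]
    exact le_of_lt this
  have hz'V : ∀ i ≤ l', u (ψ t) i ∈ V (ψ t) := by
    intro i hi
    apply hu3 (ψ t) i
    have : i * (a + 1) ≤ l' * (a + 1) := Nat.mul_le_mul_right _ hi
    omega
  have hembV : Embeds K ↥(V (ψ t)) ↥(TailS e l') := by
    apply embeds_mono_target (W := TailS e (ψ t))
    · apply Submodule.topologicalClosure_mono
      apply span_mono
      apply Set.image_mono
      intro n hn
      exact le_trans hψt.2 hn
    · exact hVemb (ψ t)
  have := pert he hdense hqmono.monotone hzblock hznorm hK l' hεs hclose hz'V hembV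
  exact hl' this

end S6

section S7
variable {X : Type*} [NormedAddCommGroup X] [NormedSpace ℝ X] [CompleteSpace X] {e : ℕ → X}

lemma lemmaA (he : IsBasicSeq e)
    (hdense : DenseRange fun a : ℕ →₀ ℝ => ∑ n ∈ a.support, a n • e n)
    (htight : ∀ y : ℕ → X, IsBlockSeq e y → ∀ K : ℝ, 0 < K → ∀ m : ℕ, ∃ l : ℕ, m < l ∧
      ¬ Embeds K ↥(Submodule.span ℝ (y '' Set.Icc m l))
          ↥((Submodule.span ℝ (e '' {n | l ≤ n})).topologicalClosure))
    {y : ℕ → X} {p : ℕ → ℕ} (hp : StrictMono p)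
    (hy : ∀ n, ‖y n‖ = 1 ∧ y n ∈ span ℝ (e '' Set.Ico (p n) (p (n + 1))))
    {K : ℝ} (hK : 0 < K) (a : ℕ) :
    ∃ l b : ℕ, a < b ∧ ¬ Embeds K ↥(span ℝ (y '' Set.Icc 0 l))
      ↥((span ℝ (e '' {n | n < a ∨ b < n})).topologicalClosure) := by
  classical
  obtain ⟨l, hl⟩ := claim1 he hdense htight hp hy hK a
  refine ⟨l, max (a + 1) l, lt_of_lt_of_le (Nat.lt_succ_self a) (le_max_left _ _), ?_⟩
  set b := max (a + 1) l with hb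
  set D := span ℝ (y '' Set.Icc 0 l) with hD
  haveI hDfin : FiniteDimensional ℝ ↥D :=
    FiniteDimensional.span_of_finite ℝ ((Set.finite_Icc 0 l).image y)
  set Wsp := (span ℝ (e '' {n | n < a ∨ b < n})).topologicalClosure with hWsp
  rintro ⟨T0, hT0⟩
  set φ : ↥D →L[ℝ] X := (PX he hdense a).comp (Wsp.subtypeL.comp T0) with hφ
  have hφapp : ∀ d : ↥D, φ d = PX he hdense a ((T0 d : X)) := fun d => rfl
  have hφrange : LinearMap.range (φ : ↥D →ₗ[ℝ] X) ≤ span ℝ (e '' {i | i < a}) := by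
    rintro _ ⟨d, rfl⟩
    exact PX_mem_head he hdense a _
  haveI hHfin : FiniteDimensional ℝ ↥(span ℝ (e '' {i | i < a})) :=
    FiniteDimensional.span_of_finite ℝ ((Set.finite_Iio a).image e)
  have hheadfr : Module.finrank ℝ ↥(span ℝ (e '' {i | i < a})) ≤ a := by
    have hseteq : e '' {i | i < a} = ↑((Finset.range a).image e) := by
      rw [Finset.coe_image, Finset.coe_range]
      rfl
    rw [hseteq]
    refine le_trans (finrank_span_finset_le_card ((Finset.range a).image e))
      (le_trans (Finset.card_image_le (f := e) (s := Finset.range a))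
        (le_of_eq (Finset.card_range a)))
  have hrfr : Module.finrank ℝ ↥(LinearMap.range (φ : ↥D →ₗ[ℝ] X)) ≤ a :=
    le_trans (Submodule.finrank_mono hφrange) hheadfr
  have hrn := LinearMap.finrank_range_add_finrank_ker (φ : ↥D →ₗ[ℝ] X)
  set V : Submodule ℝ X := Submodule.map D.subtype (LinearMap.ker (φ : ↥D →ₗ[ℝ] X)) with hV
  have hVle : V ≤ D := Submodule.map_subtype_le _ _
  have hVfr : Module.finrank ℝ ↥D ≤ Module.finrank ℝ ↥V + a := by
    have hmap : Module.finrank ℝ ↥V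
        = Module.finrank ℝ ↥(LinearMap.ker (φ : ↥D →ₗ[ℝ] X)) := by
      rw [hV]
      exact Submodule.finrank_map_subtype_eq _ _
    rw [hmap]
    omega
  apply hl V hVle hVfr
  -- construct the embedding V → Tail l
  have hmem : ∀ v : ↥V, ((Wsp.subtypeL.comp (T0.comp (inclCLM hVle))) v : X) ∈ TailS e l := by
    intro v
    obtain ⟨d₀, hd₀ker, hd₀⟩ := v.2
    have hdeq : inclCLM hVle v = d₀ := by
      apply Subtype.ext
      exact hd₀.symm
    have hφ0 : PX he hdense a ((T0 (inclCLM hVle v) : X)) = 0 := by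
      rw [hdeq]
      exact hd₀ker
    have hTd : ((T0 (inclCLM hVle v)) : X) ∈ Wsp := (T0 (inclCLM hVle v)).2
    have hsubmem := PX_sub_mem he hdense (S := {n | n < a ∨ b < n}) a hTd
    rw [hφ0, sub_zero] at hsubmem
    have hsub : {n | n < a ∨ b < n} ∩ {i | a ≤ i} ⊆ {n | l ≤ n} := by
      intro n hn
      obtain ⟨hn1, hn2⟩ := hn
      simp only [Set.mem_setOf_eq] at hn1 hn2 ⊢
      have hbl : l ≤ b := le_max_right _ _
      rcases hn1 with h | h <;> omega
    exact Submodule.topologicalClosure_mono (span_mono (Set.image_mono (f := e) hsub)) hsubmem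
  refine ⟨ContinuousLinearMap.codRestrict _ _ hmem, fun v => ?_⟩
  have hnorm1 : ‖ContinuousLinearMap.codRestrict _ _ hmem v‖ = ‖T0 (inclCLM hVle v)‖ := rfl
  have hnorm2 : ‖inclCLM hVle v‖ = ‖v‖ := rfl
  rw [hnorm1, ← hnorm2]
  exact hT0 (inclCLM hVle v)

end S7

section S8
variable {X : Type*} [NormedAddCommGroup X] [NormedSpace ℝ X] [CompleteSpace X]

noncomputable def stageSet (e y : ℕ → X) (j a : ℕ) : Set ℕ :=
  {n : ℕ | a < n.unpair.2 ∧
    ¬ Embeds ((j : ℝ) + 1) ↥(span ℝ (y '' Set.Icc 0 n.unpair.1))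
      ↥((span ℝ (e '' {m | m < a ∨ n.unpair.2 < m})).topologicalClosure)}

noncomputable def stateF (e y : ℕ → X) : ℕ → ℕ × ℕ
  | 0 => (0, sInf (stageSet e y 0 0))
  | j + 1 => ((stateF e y j).2.unpair.2 + 1,
      sInf (stageSet e y (j + 1) ((stateF e y j).2.unpair.2 + 1)))

noncomputable def fImpl (e y : ℕ → X) (i : ℕ) : ℕ :=
  if i % 2 = 0 then (stateF e y (i / 2)).1 else (stateF e y (i / 2)).2.unpair.2

variable {e : ℕ → X}

lemma stage_nonempty (he : IsBasicSeq e)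
    (hdense : DenseRange fun a : ℕ →₀ ℝ => ∑ n ∈ a.support, a n • e n)
    (htight : ∀ y : ℕ → X, IsBlockSeq e y → ∀ K : ℝ, 0 < K → ∀ m : ℕ, ∃ l : ℕ, m < l ∧
      ¬ Embeds K ↥(Submodule.span ℝ (y '' Set.Icc m l))
          ↥((Submodule.span ℝ (e '' {n | l ≤ n})).topologicalClosure))
    {y : ℕ → X} (hy : IsBlockSeq e y) (j a : ℕ) : (stageSet e y j a).Nonempty := by
  obtain ⟨p, hp, hyp⟩ := hy
  have hKpos : (0 : ℝ) < (j : ℝ) + 1 := by positivity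
  obtain ⟨l, b, hab, hni⟩ := lemmaA he hdense htight hp hyp hKpos a
  refine ⟨Nat.pair l b, ?_, ?_⟩
  · show a < (Nat.unpair (Nat.pair l b)).2
    rw [Nat.unpair_pair]
    exact hab
  · show ¬ Embeds ((j : ℝ) + 1) ↥(span ℝ (y '' Set.Icc 0 (Nat.unpair (Nat.pair l b)).1))
      ↥((span ℝ (e '' {m | m < a ∨ (Nat.unpair (Nat.pair l b)).2 < m})).topologicalClosure)
    rw [Nat.unpair_pair]
    exact hni

lemma state_mem (he : IsBasicSeq e)
    (hdense : DenseRange fun a : ℕ →₀ ℝ => ∑ n ∈ a.support, a n • e n)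
    (htight : ∀ y : ℕ → X, IsBlockSeq e y → ∀ K : ℝ, 0 < K → ∀ m : ℕ, ∃ l : ℕ, m < l ∧
      ¬ Embeds K ↥(Submodule.span ℝ (y '' Set.Icc m l))
          ↥((Submodule.span ℝ (e '' {n | l ≤ n})).topologicalClosure))
    {y : ℕ → X} (hy : IsBlockSeq e y) (j : ℕ) :
    (stateF e y j).2 ∈ stageSet e y j (stateF e y j).1 := by
  cases j with
  | zero => exact Nat.sInf_mem (stage_nonempty he hdense htight hy 0 0)
  | succ j => exact Nat.sInf_mem (stage_nonempty he hdense htight hy (j + 1) _)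

lemma fImpl_even (y : ℕ → X) (j : ℕ) : fImpl e y (2 * j) = (stateF e y j).1 := by
  have h1 : (2 * j) % 2 = 0 := by omega
  have h2 : (2 * j) / 2 = j := by omega
  simp [fImpl, h1, h2]

lemma fImpl_odd (y : ℕ → X) (j : ℕ) : fImpl e y (2 * j + 1) = (stateF e y j).2.unpair.2 := by
  have h1 : (2 * j + 1) % 2 = 1 := by omega
  have h2 : (2 * j + 1) / 2 = j := by omega
  simp [fImpl, h1, h2]

lemma fImpl_strictMono (he : IsBasicSeq e)
    (hdense : DenseRange fun a : ℕ →₀ ℝ => ∑ n ∈ a.support, a n • e n)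
    (htight : ∀ y : ℕ → X, IsBlockSeq e y → ∀ K : ℝ, 0 < K → ∀ m : ℕ, ∃ l : ℕ, m < l ∧
      ¬ Embeds K ↥(Submodule.span ℝ (y '' Set.Icc m l))
          ↥((Submodule.span ℝ (e '' {n | l ≤ n})).topologicalClosure))
    {y : ℕ → X} (hy : IsBlockSeq e y) : StrictMono (fImpl e y) := by
  apply strictMono_nat_of_lt_succ
  intro i
  rcases Nat.even_or_odd i with ⟨k, hk⟩ | ⟨k, hk⟩
  · have hik : i = 2 * k := by omega
    subst hik
    rw [fImpl_even y k, show 2 * k + 1 = 2 * k + 1 from rfl, fImpl_odd y k]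
    exact (state_mem he hdense htight hy k).1
  · have hik : i = 2 * k + 1 := by omega
    subst hik
    rw [fImpl_odd y k, show 2 * k + 1 + 1 = 2 * (k + 1) from by omega, fImpl_even y (k + 1)]
    show (stateF e y k).2.unpair.2 < (stateF e y (k + 1)).1
    simp [stateF]

lemma stage_congr {y z : ℕ → X} {M : ℕ} (hagree : ∀ i ≤ M, y i = z i) (j a : ℕ)
    {n : ℕ} (hn : n ≤ M) : n ∈ stageSet e y j a ↔ n ∈ stageSet e z j a := by
  have himg : y '' Set.Icc 0 n.unpair.1 = z '' Set.Icc 0 n.unpair.1 :=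
    Set.image_congr (fun i hi =>
      hagree i (le_trans (le_trans hi.2 (Nat.unpair_left_le n)) hn))
  simp only [stageSet, Set.mem_setOf_eq]
  rw [himg]

lemma sInf_stage_congr (he : IsBasicSeq e)
    (hdense : DenseRange fun a : ℕ →₀ ℝ => ∑ n ∈ a.support, a n • e n)
    (htight : ∀ y : ℕ → X, IsBlockSeq e y → ∀ K : ℝ, 0 < K → ∀ m : ℕ, ∃ l : ℕ, m < l ∧
      ¬ Embeds K ↥(Submodule.span ℝ (y '' Set.Icc m l))
          ↥((Submodule.span ℝ (e '' {n | l ≤ n})).topologicalClosure))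
    {y z : ℕ → X} (hy : IsBlockSeq e y) {M : ℕ} (hagree : ∀ i ≤ M, y i = z i) (j a : ℕ)
    (hM : sInf (stageSet e y j a) ≤ M) :
    sInf (stageSet e y j a) = sInf (stageSet e z j a) := by
  have hne : (stageSet e y j a).Nonempty := stage_nonempty he hdense htight hy j a
  have hmem := Nat.sInf_mem hne
  have h1 : sInf (stageSet e y j a) ∈ stageSet e z j a :=
    (stage_congr hagree j a hM).1 hmem
  refine le_antisymm ?_ (Nat.sInf_le h1)
  by_contra hlt
  push_neg at hlt
  have h2 : sInf (stageSet e z j a) ∈ stageSet e z j a := Nat.sInf_mem ⟨_, h1⟩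
  have h3 : sInf (stageSet e z j a) ∈ stageSet e y j a :=
    (stage_congr hagree j a (le_trans (le_of_lt hlt) hM)).2 h2
  exact Nat.notMem_of_lt_sInf hlt h3

lemma stateF_agree (he : IsBasicSeq e)
    (hdense : DenseRange fun a : ℕ →₀ ℝ => ∑ n ∈ a.support, a n • e n)
    (htight : ∀ y : ℕ → X, IsBlockSeq e y → ∀ K : ℝ, 0 < K → ∀ m : ℕ, ∃ l : ℕ, m < l ∧
      ¬ Embeds K ↥(Submodule.span ℝ (y '' Set.Icc m l))
          ↥((Submodule.span ℝ (e '' {n | l ≤ n})).topologicalClosure))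
    {y : ℕ → X} (hy : IsBlockSeq e y) (j : ℕ) :
    ∃ N : ℕ, ∀ z : ℕ → X, (∀ i ≤ N, y i = z i) →
      ∀ j' ≤ j, stateF e y j' = stateF e z j' := by
  induction j with
  | zero =>
    refine ⟨sInf (stageSet e y 0 0), fun z hagree j' hj' => ?_⟩
    have hj0 : j' = 0 := Nat.le_zero.1 hj'
    subst hj0
    show (0, sInf (stageSet e y 0 0)) = (0, sInf (stageSet e z 0 0))
    rw [sInf_stage_congr he hdense htight hy hagree 0 0 (le_refl _)]
  | succ j ih =>
    obtain ⟨N, hN⟩ := ih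
    refine ⟨max N (stateF e y (j + 1)).2, fun z hagree j' hj' => ?_⟩
    have hagreeN : ∀ i ≤ N, y i = z i := fun i hi => hagree i (le_trans hi (le_max_left _ _))
    rcases Nat.lt_succ_iff_lt_or_eq.1 (Nat.lt_succ_of_le hj') with h | h
    · exact hN z hagreeN j' (by omega)
    · subst h
      have hsame : stateF e y j = stateF e z j := hN z hagreeN j (le_refl _)
      show ((stateF e y j).2.unpair.2 + 1, sInf (stageSet e y (j + 1) _))
        = ((stateF e z j).2.unpair.2 + 1, sInf (stageSet e z (j + 1) _))
      rw [← hsame]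
      have hM : sInf (stageSet e y (j + 1) ((stateF e y j).2.unpair.2 + 1))
          ≤ max N (stateF e y (j + 1)).2 := by
        have : (stateF e y (j + 1)).2
            = sInf (stageSet e y (j + 1) ((stateF e y j).2.unpair.2 + 1)) := by
          simp [stateF]
        rw [← this]
        exact le_max_right _ _
      rw [sInf_stage_congr he hdense htight hy hagree (j + 1) _ hM]

end S8


/-- a Schauder basis `(eₙ)` which is tight with constants is continuously
tight: there is a continuous assignment (continuity expressed via the discrete product
topology on block sequences) `ȳ ↦ f(ȳ)` of strictly increasing sequences of endpoints of
intervals `Iⱼ = [f(ȳ)(2j), f(ȳ)(2j+1)]` so that for every infinite `A ⊆ ℕ`, the closed span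
of `ȳ` does not embed into the closed span of `{eₙ : n ∉ ⋃_{j∈A} Iⱼ}`. -/
theorem tight_with_constants_implies_continuously_tight
    {X : Type*} [NormedAddCommGroup X] [NormedSpace ℝ X] [CompleteSpace X]
    (e : ℕ → X) (he : IsBasicSeq e)
    (hdense : DenseRange fun a : ℕ →₀ ℝ => ∑ n ∈ a.support, a n • e n)
    (htight : ∀ y : ℕ → X, IsBlockSeq e y → ∀ K : ℝ, 0 < K → ∀ m : ℕ, ∃ l : ℕ, m < l ∧
      ¬ Embeds K ↥(Submodule.span ℝ (y '' Set.Icc m l))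
          ↥((Submodule.span ℝ (e '' {n | l ≤ n})).topologicalClosure)) :
    ∃ f : (ℕ → X) → (ℕ → ℕ),
      (∀ y : ℕ → X, IsBlockSeq e y → ∀ j : ℕ, ∃ N : ℕ, ∀ z : ℕ → X, IsBlockSeq e z →
        (∀ i ≤ N, y i = z i) → ∀ i ≤ j, f y i = f z i) ∧
      ∀ y : ℕ → X, IsBlockSeq e y → StrictMono (f y) ∧
        ∀ A : Set ℕ, A.Infinite →
          ¬ ∃ K : ℝ, 0 < K ∧
            Embeds K ↥((Submodule.span ℝ (Set.range y)).topologicalClosure)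
              ↥((Submodule.span ℝ
                  (e '' {n | ∀ j ∈ A, n ∉ Set.Icc (f y (2 * j)) (f y (2 * j + 1))})).topologicalClosure) := by
  refine ⟨fImpl e, ?_, ?_⟩
  · intro y hy j
    obtain ⟨N, hN⟩ := stateF_agree he hdense htight hy j
    refine ⟨N, fun z _ hagree i hi => ?_⟩
    have hstate : stateF e y (i / 2) = stateF e z (i / 2) :=
      hN z hagree (i / 2) (by omega)
    simp [fImpl, hstate]
  · intro y hy
    refine ⟨fImpl_strictMono he hdense htight hy, ?_⟩
    intro A hA
    rintro ⟨K, hK, T, hT⟩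
    obtain ⟨j, hjA, hjK⟩ := hA.exists_gt ⌈K⌉₊
    have hKj : K ≤ (j : ℝ) + 1 := by
      have h1 : K ≤ (⌈K⌉₊ : ℝ) := Nat.le_ceil K
      have h2 : (⌈K⌉₊ : ℝ) ≤ (j : ℝ) := Nat.cast_le.2 (le_of_lt hjK)
      linarith
    obtain ⟨hmem1, hmem2⟩ := state_mem he hdense htight hy j
    apply hmem2
    have hle1 : span ℝ (y '' Set.Icc 0 (stateF e y j).2.unpair.1)
        ≤ (span ℝ (Set.range y)).topologicalClosure :=
      le_trans (span_mono (Set.image_subset_range y _)) (Submodule.le_topologicalClosure _)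
    have hsub : {n | ∀ j' ∈ A, n ∉ Set.Icc (fImpl e y (2 * j')) (fImpl e y (2 * j' + 1))}
        ⊆ {m | m < (stateF e y j).1 ∨ (stateF e y j).2.unpair.2 < m} := by
      intro n hn
      have h := hn j hjA
      rw [fImpl_even y j, fImpl_odd y j, Set.mem_Icc] at h
      show n < (stateF e y j).1 ∨ (stateF e y j).2.unpair.2 < n
      omega
    have hle2 : (span ℝ (e '' {n | ∀ j' ∈ A,
          n ∉ Set.Icc (fImpl e y (2 * j')) (fImpl e y (2 * j' + 1))})).topologicalClosure
        ≤ (span ℝ (e '' {m | m < (stateF e y j).1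
            ∨ (stateF e y j).2.unpair.2 < m})).topologicalClosure :=
      Submodule.topologicalClosure_mono (span_mono (Set.image_mono (f := e) hsub))
    refine ⟨(inclCLM hle2).comp (T.comp (inclCLM hle1)), fun v => ?_⟩
    have h1 : ‖((inclCLM hle2).comp (T.comp (inclCLM hle1))) v‖ = ‖T (inclCLM hle1 v)‖ := rfl
    have h2 : ‖inclCLM hle1 v‖ = ‖v‖ := rfl
    rw [h1, ← h2]
    exact ⟨(hT _).1, le_trans (hT _).2 (mul_le_mul_of_nonneg_right hKj (norm_nonneg _))⟩
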